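/- Let n, m be positive integers and ι a finite index set. Let M be an n×n symmetric real matrix, and for each i ∈ ι let D i be an m×m positive definite real matrix and B i an m×n real matrix. Define the symmetric matrix X indexed by (Fin n) ⊕ (ι × Fin m) by: X (inl a) (inl b) = M a b, X (inl a) (inr (i,c)) = X (inr (i,c)) (inl a) = (B i) c a, X (inr (i,c)) (inr (i',c')) = −(D i) c c' if i = i' and 0 otherwise. Then X is negative definite if and only if M + ∑_i (B i)ᵀ·(D i)⁻¹·(B i) is negative definite. -/

import Mathlib

open Matrix

section aux

variable {p q : Type*} [Fintype p] [Fintype q] [DecidableEq q]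

/-- PosDef version of the Schur complement criterion (2,2 block), over ℝ. -/
lemma posDef_fromBlocks₂₂_real (A : Matrix p p ℝ) (B : Matrix p q ℝ) {D : Matrix q q ℝ}
    (hD : D.PosDef) :
    (fromBlocks A B Bᴴ D).PosDef ↔ (A - B * D⁻¹ * Bᴴ).PosDef := by
  haveI := hD.isUnit.invertible
  constructor
  · intro h
    refine PosDef.of_dotProduct_mulVec_pos ((IsHermitian.fromBlocks₂₂ A B hD.1).mp h.1) fun x hx => ?_
    have hv : Sum.elim x (-((D⁻¹ * Bᴴ) *ᵥ x)) ≠ 0 := by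
      intro h0
      apply hx
      ext a
      exact congrFun h0 (Sum.inl a)
    have := h.dotProduct_mulVec_pos hv
    have hse : ∀ (x' : p → ℝ) (y' : q → ℝ), star (Sum.elim x' y') = Sum.elim (star x') (star y') :=
      fun x' y' => by ext (a | b) <;> rfl
    rw [dotProduct_mulVec, hse] at this
    rw [show (star x ⊕ᵥ star (-((D⁻¹ * Bᴴ) *ᵥ x))) = star (x ⊕ᵥ (-((D⁻¹ * Bᴴ) *ᵥ x))) from
      (hse _ _).symm] at this
    rw [schur_complement_eq₂₂ A B _ _ hD.1] at this
    simp only [add_neg_cancel, star_zero, zero_vecMul, zero_dotProduct, zero_add] at this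
    rwa [dotProduct_mulVec]
  · intro h
    refine PosDef.of_dotProduct_mulVec_pos ((IsHermitian.fromBlocks₂₂ A B hD.1).mpr h.1) fun v hv => ?_
    rw [dotProduct_mulVec, ← Sum.elim_comp_inl_inr v,
      schur_complement_eq₂₂ A B _ _ hD.1]
    by_cases hx : v ∘ Sum.inl = 0
    · have hy : v ∘ Sum.inr ≠ 0 := by
        intro h0
        apply hv
        ext (a | b)
        · exact congrFun hx a
        · exact congrFun h0 b
      rw [hx]
      simp only [mulVec_zero, zero_add, star_zero, zero_vecMul, zero_dotProduct, add_zero]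
      have := hD.dotProduct_mulVec_pos hy
      rwa [dotProduct_mulVec] at this
    · have h2 := h.dotProduct_mulVec_pos hx
      rw [dotProduct_mulVec] at h2
      have h1 := hD.posSemidef.dotProduct_mulVec_nonneg ((D⁻¹ * Bᴴ) *ᵥ (v ∘ Sum.inl) + v ∘ Sum.inr)
      rw [dotProduct_mulVec] at h1
      exact add_pos_of_nonneg_of_pos h1 h2

end aux

section blockdiag

variable {ι : Type*} [Fintype ι] [DecidableEq ι] {m : ℕ}

/-- The block-diagonal matrix built from the `D i`. -/
private def bd (D : ι → Matrix (Fin m) (Fin m) ℝ) : Matrix (ι × Fin m) (ι × Fin m) ℝ :=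
  Matrix.of fun ic ic' => if ic.1 = ic'.1 then D ic.1 ic.2 ic'.2 else 0

lemma bd_posDef (D : ι → Matrix (Fin m) (Fin m) ℝ) (hD : ∀ i, (D i).PosDef) :
    (bd D).PosDef := by
  refine PosDef.of_dotProduct_mulVec_pos ?_ ?_
  · ext ⟨i, c⟩ ⟨i', c'⟩
    simp only [bd, conjTranspose_apply, of_apply, star_trivial]
    rcases eq_or_ne i i' with rfl | hne
    · simp only [if_pos rfl]
      exact congrFun (congrFun (hD i).1 c) c'
    · simp [hne, Ne.symm hne]
  · intro x hx
    have key : dotProduct (star x) (bd D *ᵥ x) =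
        ∑ i, dotProduct (star fun c => x (i, c)) (D i *ᵥ fun c => x (i, c)) := by
      simp [dotProduct, mulVec, bd, of_apply, Fintype.sum_prod_type, ite_mul, zero_mul,
        Finset.sum_ite_irrel, Finset.sum_const_zero, Finset.sum_ite_eq, Finset.sum_ite_eq',
        star_trivial]
    rw [key]
    obtain ⟨⟨i₀, c₀⟩, hic⟩ := Function.ne_iff.mp hx
    refine Finset.sum_pos' (fun i _ => (hD i).posSemidef.dotProduct_mulVec_nonneg _) ⟨i₀, Finset.mem_univ _, ?_⟩
    refine (hD i₀).dotProduct_mulVec_pos fun h0 => hic ?_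
    exact congrFun h0 c₀

lemma bd_inv (D : ι → Matrix (Fin m) (Fin m) ℝ) (hD : ∀ i, (D i).PosDef) :
    (bd D)⁻¹ = bd (fun i => (D i)⁻¹) := by
  apply inv_eq_right_inv
  ext ⟨i, c⟩ ⟨i', c'⟩
  have hmul : ∀ i : ι, D i * (D i)⁻¹ = 1 := fun i =>
    mul_nonsing_inv _ ((hD i).isUnit.map (detMonoidHom))
  simp only [mul_apply, bd, of_apply, Fintype.sum_prod_type, ite_mul, zero_mul,
    Finset.sum_ite_irrel, Finset.sum_const_zero, Finset.sum_ite_eq, Finset.sum_ite_eq',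
    Finset.mem_univ, if_true, one_apply]
  rcases eq_or_ne i i' with rfl | hne
  · have := congrFun (congrFun (hmul i) c) c'
    rw [mul_apply] at this
    simpa [one_apply, Prod.ext_iff] using this
  · simp [hne, Prod.ext_iff]

end blockdiag

/-- Indexed-family Schur complement: the block matrix with upper-left block `M`,
off-diagonal blocks built from the `B i`, and block-diagonal lower-right part
`−diag(D i)` is negative definite iff `M + ∑ i, Bᵢᵀ Dᵢ⁻¹ Bᵢ` is negative definite. -/
theorem stmt_11 {ι : Type*} [Fintype ι] [DecidableEq ι] (n m : ℕ)
    (hn : 0 < n) (hm : 0 < m)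
    (M : Matrix (Fin n) (Fin n) ℝ) (hM : M.IsHermitian)
    (D : ι → Matrix (Fin m) (Fin m) ℝ) (hD : ∀ i, (D i).PosDef)
    (B : ι → Matrix (Fin m) (Fin n) ℝ) :
    (-(Matrix.fromBlocks M
          (Matrix.of fun (a : Fin n) (ic : ι × Fin m) => B ic.1 ic.2 a)
          (Matrix.of fun (ic : ι × Fin m) (a : Fin n) => B ic.1 ic.2 a)
          (Matrix.of fun (ic ic' : ι × Fin m) =>
            if ic.1 = ic'.1 then -(D ic.1 ic.2 ic'.2) else 0))).PosDef ↔
      (-(M + ∑ i, (B i)ᵀ * (D i)⁻¹ * B i)).PosDef := by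
  set C : Matrix (Fin n) (ι × Fin m) ℝ :=
    Matrix.of fun (a : Fin n) (ic : ι × Fin m) => B ic.1 ic.2 a with hC
  have hbig : -(Matrix.fromBlocks M C
          (Matrix.of fun (ic : ι × Fin m) (a : Fin n) => B ic.1 ic.2 a)
          (Matrix.of fun (ic ic' : ι × Fin m) =>
            if ic.1 = ic'.1 then -(D ic.1 ic.2 ic'.2) else 0)) =
      Matrix.fromBlocks (-M) (-C) (-C)ᴴ (bd D) := by
    rw [fromBlocks_neg]
    ext x y
    rcases x with a | ic <;> rcases y with b | ic' <;>
      simp only [fromBlocks, bd, hC, of_apply, Sum.elim_inl, Sum.elim_inr, Matrix.neg_apply,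
        conjTranspose_apply, star_trivial, Pi.neg_apply]
    split <;> simp
  rw [hbig, posDef_fromBlocks₂₂_real (-M) (-C) (bd_posDef D hD)]
  have heq : -M - -C * (bd D)⁻¹ * (-C)ᴴ = -(M + ∑ i, (B i)ᵀ * (D i)⁻¹ * B i) := by
    rw [bd_inv D hD, conjTranspose_neg, Matrix.neg_mul, Matrix.mul_neg, Matrix.neg_mul, neg_neg]
    have hCC : C * bd (fun i => (D i)⁻¹) * Cᴴ = ∑ i, (B i)ᵀ * (D i)⁻¹ * B i := by
      ext a b
      simp only [mul_apply, bd, hC, of_apply, conjTranspose_apply, star_trivial,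
        Matrix.sum_apply, Fintype.sum_prod_type, transpose_apply, mul_ite, mul_zero, ite_mul,
        zero_mul, Finset.sum_ite_irrel, Finset.sum_const_zero, Finset.sum_ite_eq,
        Finset.sum_ite_eq', Finset.mem_univ, if_true]
      
    rw [hCC]
    abel
  rw [heq]
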